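/- Adequacy of the anti-sequent calculus R_F for the four-valued logic F: an F-anti-sequent Γ₁ ∤ Γ₂ ∤ Γ₃ ∤ Γ₄ is provable in R_F if and only if it is refutable. -/
import Mathlib


/-- Truth values of the four-valued logic F: f, n, b, t, where in the truth
order f is least, t is greatest, and n, b are incomparable. -/
inductive V4 : Type
  | f | n | b | t
deriving DecidableEq, Repr

namespace V4

/-- Negation: f ↦ t, t ↦ f, and n, b are fixed. -/
def negv : V4 → V4
  | .f => .t
  | .t => .f
  | .n => .n
  | .b => .b

/-- Conjunction: the meet with respect to the truth order (f least, t
greatest, n and b incomparable, so the meet of n and b is f). -/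
def conjv : V4 → V4 → V4
  | .t, y => y
  | .f, _ => .f
  | .n, .t => .n
  | .n, .n => .n
  | .n, .b => .f
  | .n, .f => .f
  | .b, .t => .b
  | .b, .b => .b
  | .b, .n => .f
  | .b, .f => .f

/-- Implication: `x ⊃ y` is `y` if `x` is designated (b or t), and `t`
otherwise. -/
def impv : V4 → V4 → V4
  | .b, y => y
  | .t, y => y
  | .f, _ => .t
  | .n, _ => .t

end V4

/-- Formulas of the four-valued logic F, with atoms indexed by ℕ, the
constants B and N, negation, conjunction, and implication. -/
inductive FForm : Type
  | atom : ℕ → FForm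
  | bb : FForm
  | nn : FForm
  | neg : FForm → FForm
  | conj : FForm → FForm → FForm
  | imp : FForm → FForm → FForm
deriving DecidableEq

namespace FForm

/-- The valuation of F extending an interpretation `I : ℕ → V4`. -/
def val (I : ℕ → V4) : FForm → V4
  | atom p => I p
  | bb => .b
  | nn => .n
  | neg φ => (φ.val I).negv
  | conj φ ψ => (φ.val I).conjv (ψ.val I)
  | imp φ ψ => (φ.val I).impv (ψ.val I)

/-- `I` is an F-model of `φ`: `v_I(φ)` is designated, i.e. b or t. -/
def IsModel (I : ℕ → V4) (φ : FForm) : Prop := φ.val I = .b ∨ φ.val I = .t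

/-- `I` is an F-model of the theory `Γ`. -/
def IsModelSet (I : ℕ → V4) (Γ : Set FForm) : Prop := ∀ φ ∈ Γ, IsModel I φ

end FForm

/-- An F-anti-sequent `Γ₁ ∤ Γ₂ ∤ Γ₃ ∤ Γ₄` is refuted by `I` if no formula of
`Γ₁` takes value f, none of `Γ₂` value n, none of `Γ₃` value b, and none of
`Γ₄` value t. -/
def FAntiRefutedBy (I : ℕ → V4) (Γ₁ Γ₂ Γ₃ Γ₄ : Finset FForm) : Prop :=
  (∀ φ ∈ Γ₁, φ.val I ≠ .f) ∧ (∀ φ ∈ Γ₂, φ.val I ≠ .n) ∧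
  (∀ φ ∈ Γ₃, φ.val I ≠ .b) ∧ (∀ φ ∈ Γ₄, φ.val I ≠ .t)

/-- An F-anti-sequent is refutable if some interpretation refutes it. -/
def FAntiRefutable (Γ₁ Γ₂ Γ₃ Γ₄ : Finset FForm) : Prop :=
  ∃ I, FAntiRefutedBy I Γ₁ Γ₂ Γ₃ Γ₄

/-- A formula that is an atom or one of the constants B, N. -/
def FForm.IsBasic : FForm → Prop
  | .atom _ => True
  | .bb => True
  | .nn => True
  | _ => False

/-- The anti-sequent calculus `R_F` for the four-valued logic F (components in
the order f ∤ n ∤ b ∤ t). -/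
inductive RF : Finset FForm → Finset FForm → Finset FForm → Finset FForm → Prop
  | ax (Γ Δ Θ Ω : Finset FForm) :
      (∀ φ ∈ Γ ∪ Δ ∪ Θ ∪ Ω, φ.IsBasic) → Γ ∩ Δ ∩ Θ ∩ Ω = ∅ →
      .nn ∉ Δ → .bb ∉ Θ →
      RF Γ Δ Θ Ω
  | negF {Γ Δ Θ Ω : Finset FForm} {φ : FForm} :
      RF Γ Δ Θ (insert φ Ω) → RF (insert (.neg φ) Γ) Δ Θ Ω
  | negN {Γ Δ Θ Ω : Finset FForm} {φ : FForm} :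
      RF Γ (insert φ Δ) Θ Ω → RF Γ (insert (.neg φ) Δ) Θ Ω
  | negB {Γ Δ Θ Ω : Finset FForm} {φ : FForm} :
      RF Γ Δ (insert φ Θ) Ω → RF Γ Δ (insert (.neg φ) Θ) Ω
  | negT {Γ Δ Θ Ω : Finset FForm} {φ : FForm} :
      RF (insert φ Γ) Δ Θ Ω → RF Γ Δ Θ (insert (.neg φ) Ω)
  | conjF1 {Γ Δ Θ Ω : Finset FForm} {φ ψ : FForm} :
      RF (insert φ (insert ψ Γ)) (insert φ (insert ψ Δ)) Θ Ω →
      RF (insert (.conj φ ψ) Γ) Δ Θ Ω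
  | conjF2 {Γ Δ Θ Ω : Finset FForm} {φ ψ : FForm} :
      RF (insert φ (insert ψ Γ)) Δ (insert φ (insert ψ Θ)) Ω →
      RF (insert (.conj φ ψ) Γ) Δ Θ Ω
  | conjN1 {Γ Δ Θ Ω : Finset FForm} {φ ψ : FForm} :
      RF Γ (insert φ (insert ψ Δ)) Θ Ω → RF Γ (insert (.conj φ ψ) Δ) Θ Ω
  | conjN2 {Γ Δ Θ Ω : Finset FForm} {φ ψ : FForm} :
      RF Γ (insert φ Δ) Θ (insert φ Ω) → RF Γ (insert (.conj φ ψ) Δ) Θ Ω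
  | conjN3 {Γ Δ Θ Ω : Finset FForm} {φ ψ : FForm} :
      RF Γ (insert ψ Δ) Θ (insert ψ Ω) → RF Γ (insert (.conj φ ψ) Δ) Θ Ω
  | conjB1 {Γ Δ Θ Ω : Finset FForm} {φ ψ : FForm} :
      RF Γ Δ (insert φ (insert ψ Θ)) Ω → RF Γ Δ (insert (.conj φ ψ) Θ) Ω
  | conjB2 {Γ Δ Θ Ω : Finset FForm} {φ ψ : FForm} :
      RF Γ Δ (insert φ Θ) (insert φ Ω) → RF Γ Δ (insert (.conj φ ψ) Θ) Ω
  | conjB3 {Γ Δ Θ Ω : Finset FForm} {φ ψ : FForm} :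
      RF Γ Δ (insert ψ Θ) (insert ψ Ω) → RF Γ Δ (insert (.conj φ ψ) Θ) Ω
  | conjT1 {Γ Δ Θ Ω : Finset FForm} {φ ψ : FForm} :
      RF Γ Δ Θ (insert φ Ω) → RF Γ Δ Θ (insert (.conj φ ψ) Ω)
  | conjT2 {Γ Δ Θ Ω : Finset FForm} {φ ψ : FForm} :
      RF Γ Δ Θ (insert ψ Ω) → RF Γ Δ Θ (insert (.conj φ ψ) Ω)
  | impF1 {Γ Δ Θ Ω : Finset FForm} {φ ψ : FForm} :
      RF Γ Δ (insert φ Θ) (insert φ Ω) → RF (insert (.imp φ ψ) Γ) Δ Θ Ω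
  | impF2 {Γ Δ Θ Ω : Finset FForm} {φ ψ : FForm} :
      RF (insert ψ Γ) Δ Θ Ω → RF (insert (.imp φ ψ) Γ) Δ Θ Ω
  | impN1 {Γ Δ Θ Ω : Finset FForm} {φ ψ : FForm} :
      RF Γ Δ (insert φ Θ) (insert φ Ω) → RF Γ (insert (.imp φ ψ) Δ) Θ Ω
  | impN2 {Γ Δ Θ Ω : Finset FForm} {φ ψ : FForm} :
      RF Γ (insert ψ Δ) Θ Ω → RF Γ (insert (.imp φ ψ) Δ) Θ Ω
  | impB1 {Γ Δ Θ Ω : Finset FForm} {φ ψ : FForm} :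
      RF Γ Δ (insert φ Θ) (insert φ Ω) → RF Γ Δ (insert (.imp φ ψ) Θ) Ω
  | impB2 {Γ Δ Θ Ω : Finset FForm} {φ ψ : FForm} :
      RF Γ Δ (insert ψ Θ) Ω → RF Γ Δ (insert (.imp φ ψ) Θ) Ω
  | impT {Γ Δ Θ Ω : Finset FForm} {φ ψ : FForm} :
      RF (insert φ Γ) (insert φ Δ) Θ (insert ψ Ω) →
      RF Γ Δ Θ (insert (.imp φ ψ) Ω)

section Adequacy

open FForm

/-! ### Auxiliary lemmas -/

lemma ref1 {I : ℕ → V4} {φ : FForm} {Γ Δ Θ Ω : Finset FForm} :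
    FAntiRefutedBy I (insert φ Γ) Δ Θ Ω ↔
      (φ.val I ≠ .f ∧ FAntiRefutedBy I Γ Δ Θ Ω) := by
  simp only [FAntiRefutedBy, Finset.forall_mem_insert]; tauto

lemma ref2 {I : ℕ → V4} {φ : FForm} {Γ Δ Θ Ω : Finset FForm} :
    FAntiRefutedBy I Γ (insert φ Δ) Θ Ω ↔
      (φ.val I ≠ .n ∧ FAntiRefutedBy I Γ Δ Θ Ω) := by
  simp only [FAntiRefutedBy, Finset.forall_mem_insert]; tauto

lemma ref3 {I : ℕ → V4} {φ : FForm} {Γ Δ Θ Ω : Finset FForm} :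
    FAntiRefutedBy I Γ Δ (insert φ Θ) Ω ↔
      (φ.val I ≠ .b ∧ FAntiRefutedBy I Γ Δ Θ Ω) := by
  simp only [FAntiRefutedBy, Finset.forall_mem_insert]; tauto

lemma ref4 {I : ℕ → V4} {φ : FForm} {Γ Δ Θ Ω : Finset FForm} :
    FAntiRefutedBy I Γ Δ Θ (insert φ Ω) ↔
      (φ.val I ≠ .t ∧ FAntiRefutedBy I Γ Δ Θ Ω) := by
  simp only [FAntiRefutedBy, Finset.forall_mem_insert]; tauto

/-- The interpretation used to refute an axiom. -/
def axI (Γ Δ Θ : Finset FForm) : ℕ → V4 := fun p =>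
  if FForm.atom p ∈ Γ then
    (if FForm.atom p ∈ Δ then (if FForm.atom p ∈ Θ then .t else .b) else .n)
  else .f

/-! ### Soundness -/

lemma RF.sound {Γ₁ Γ₂ Γ₃ Γ₄ : Finset FForm} (h : RF Γ₁ Γ₂ Γ₃ Γ₄) :
    FAntiRefutable Γ₁ Γ₂ Γ₃ Γ₄ := by
  induction h with
  | ax Γ Δ Θ Ω hbas hdisj hn hb =>
    refine ⟨axI Γ Δ Θ, ?_, ?_, ?_, ?_⟩
    · intro φ hφ
      have hbφ := hbas φ (by simp [Finset.mem_union]; tauto)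
      cases φ with
      | atom p => simp only [FForm.val, axI, hφ]; split_ifs <;> simp
      | bb => simp [FForm.val]
      | nn => simp [FForm.val]
      | neg _ => simp [FForm.IsBasic] at hbφ
      | conj _ _ => simp [FForm.IsBasic] at hbφ
      | imp _ _ => simp [FForm.IsBasic] at hbφ
    · intro φ hφ
      have hbφ := hbas φ (by simp [Finset.mem_union]; tauto)
      cases φ with
      | atom p => simp only [FForm.val, axI, hφ]; split_ifs <;> simp
      | bb => simp [FForm.val]
      | nn => exact absurd hφ hn
      | neg _ => simp [FForm.IsBasic] at hbφ
      | conj _ _ => simp [FForm.IsBasic] at hbφ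
      | imp _ _ => simp [FForm.IsBasic] at hbφ
    · intro φ hφ
      have hbφ := hbas φ (by simp [Finset.mem_union]; tauto)
      cases φ with
      | atom p => simp only [FForm.val, axI, hφ]; split_ifs <;> simp
      | bb => exact absurd hφ hb
      | nn => simp [FForm.val]
      | neg _ => simp [FForm.IsBasic] at hbφ
      | conj _ _ => simp [FForm.IsBasic] at hbφ
      | imp _ _ => simp [FForm.IsBasic] at hbφ
    · intro φ hφ
      have hbφ := hbas φ (by simp [Finset.mem_union]; tauto)
      cases φ with
      | atom p =>
        simp only [FForm.val, axI]
        split_ifs with h1 h2 h3 <;> try simp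
        exfalso
        have hmem : FForm.atom p ∈ Γ ∩ Δ ∩ Θ ∩ Ω := by
          simp [Finset.mem_inter, h1, h2, h3, hφ]
        rw [hdisj] at hmem; simp at hmem
      | bb => simp [FForm.val]
      | nn => simp [FForm.val]
      | neg _ => simp [FForm.IsBasic] at hbφ
      | conj _ _ => simp [FForm.IsBasic] at hbφ
      | imp _ _ => simp [FForm.IsBasic] at hbφ
  | @negF Γ Δ Θ Ω φ _ ih =>
    obtain ⟨I, hI⟩ := ih
    refine ⟨I, ?_⟩
    simp only [ref1, ref2, ref3, ref4] at hI ⊢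
    cases hv : φ.val I <;> simp_all [FForm.val, V4.negv]
  | @negN Γ Δ Θ Ω φ _ ih =>
    obtain ⟨I, hI⟩ := ih
    refine ⟨I, ?_⟩
    simp only [ref1, ref2, ref3, ref4] at hI ⊢
    cases hv : φ.val I <;> simp_all [FForm.val, V4.negv]
  | @negB Γ Δ Θ Ω φ _ ih =>
    obtain ⟨I, hI⟩ := ih
    refine ⟨I, ?_⟩
    simp only [ref1, ref2, ref3, ref4] at hI ⊢
    cases hv : φ.val I <;> simp_all [FForm.val, V4.negv]
  | @negT Γ Δ Θ Ω φ _ ih =>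
    obtain ⟨I, hI⟩ := ih
    refine ⟨I, ?_⟩
    simp only [ref1, ref2, ref3, ref4] at hI ⊢
    cases hv : φ.val I <;> simp_all [FForm.val, V4.negv]
  | @conjF1 Γ Δ Θ Ω φ ψ _ ih =>
    obtain ⟨I, hI⟩ := ih
    refine ⟨I, ?_⟩
    simp only [ref1, ref2, ref3, ref4] at hI ⊢
    cases hv : φ.val I <;> cases hw : ψ.val I <;> simp_all [FForm.val, V4.conjv]
  | @conjF2 Γ Δ Θ Ω φ ψ _ ih =>
    obtain ⟨I, hI⟩ := ih
    refine ⟨I, ?_⟩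
    simp only [ref1, ref2, ref3, ref4] at hI ⊢
    cases hv : φ.val I <;> cases hw : ψ.val I <;> simp_all [FForm.val, V4.conjv]
  | @conjN1 Γ Δ Θ Ω φ ψ _ ih =>
    obtain ⟨I, hI⟩ := ih
    refine ⟨I, ?_⟩
    simp only [ref1, ref2, ref3, ref4] at hI ⊢
    cases hv : φ.val I <;> cases hw : ψ.val I <;> simp_all [FForm.val, V4.conjv]
  | @conjN2 Γ Δ Θ Ω φ ψ _ ih =>
    obtain ⟨I, hI⟩ := ih
    refine ⟨I, ?_⟩
    simp only [ref1, ref2, ref3, ref4] at hI ⊢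
    cases hv : φ.val I <;> cases hw : ψ.val I <;> simp_all [FForm.val, V4.conjv]
  | @conjN3 Γ Δ Θ Ω φ ψ _ ih =>
    obtain ⟨I, hI⟩ := ih
    refine ⟨I, ?_⟩
    simp only [ref1, ref2, ref3, ref4] at hI ⊢
    cases hv : φ.val I <;> cases hw : ψ.val I <;> simp_all [FForm.val, V4.conjv]
  | @conjB1 Γ Δ Θ Ω φ ψ _ ih =>
    obtain ⟨I, hI⟩ := ih
    refine ⟨I, ?_⟩
    simp only [ref1, ref2, ref3, ref4] at hI ⊢
    cases hv : φ.val I <;> cases hw : ψ.val I <;> simp_all [FForm.val, V4.conjv]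
  | @conjB2 Γ Δ Θ Ω φ ψ _ ih =>
    obtain ⟨I, hI⟩ := ih
    refine ⟨I, ?_⟩
    simp only [ref1, ref2, ref3, ref4] at hI ⊢
    cases hv : φ.val I <;> cases hw : ψ.val I <;> simp_all [FForm.val, V4.conjv]
  | @conjB3 Γ Δ Θ Ω φ ψ _ ih =>
    obtain ⟨I, hI⟩ := ih
    refine ⟨I, ?_⟩
    simp only [ref1, ref2, ref3, ref4] at hI ⊢
    cases hv : φ.val I <;> cases hw : ψ.val I <;> simp_all [FForm.val, V4.conjv]
  | @conjT1 Γ Δ Θ Ω φ ψ _ ih =>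
    obtain ⟨I, hI⟩ := ih
    refine ⟨I, ?_⟩
    simp only [ref1, ref2, ref3, ref4] at hI ⊢
    cases hv : φ.val I <;> cases hw : ψ.val I <;> simp_all [FForm.val, V4.conjv]
  | @conjT2 Γ Δ Θ Ω φ ψ _ ih =>
    obtain ⟨I, hI⟩ := ih
    refine ⟨I, ?_⟩
    simp only [ref1, ref2, ref3, ref4] at hI ⊢
    cases hv : φ.val I <;> cases hw : ψ.val I <;> simp_all [FForm.val, V4.conjv]
  | @impF1 Γ Δ Θ Ω φ ψ _ ih =>
    obtain ⟨I, hI⟩ := ih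
    refine ⟨I, ?_⟩
    simp only [ref1, ref2, ref3, ref4] at hI ⊢
    cases hv : φ.val I <;> cases hw : ψ.val I <;> simp_all [FForm.val, V4.impv]
  | @impF2 Γ Δ Θ Ω φ ψ _ ih =>
    obtain ⟨I, hI⟩ := ih
    refine ⟨I, ?_⟩
    simp only [ref1, ref2, ref3, ref4] at hI ⊢
    cases hv : φ.val I <;> cases hw : ψ.val I <;> simp_all [FForm.val, V4.impv]
  | @impN1 Γ Δ Θ Ω φ ψ _ ih =>
    obtain ⟨I, hI⟩ := ih
    refine ⟨I, ?_⟩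
    simp only [ref1, ref2, ref3, ref4] at hI ⊢
    cases hv : φ.val I <;> cases hw : ψ.val I <;> simp_all [FForm.val, V4.impv]
  | @impN2 Γ Δ Θ Ω φ ψ _ ih =>
    obtain ⟨I, hI⟩ := ih
    refine ⟨I, ?_⟩
    simp only [ref1, ref2, ref3, ref4] at hI ⊢
    cases hv : φ.val I <;> cases hw : ψ.val I <;> simp_all [FForm.val, V4.impv]
  | @impB1 Γ Δ Θ Ω φ ψ _ ih =>
    obtain ⟨I, hI⟩ := ih
    refine ⟨I, ?_⟩
    simp only [ref1, ref2, ref3, ref4] at hI ⊢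
    cases hv : φ.val I <;> cases hw : ψ.val I <;> simp_all [FForm.val, V4.impv]
  | @impB2 Γ Δ Θ Ω φ ψ _ ih =>
    obtain ⟨I, hI⟩ := ih
    refine ⟨I, ?_⟩
    simp only [ref1, ref2, ref3, ref4] at hI ⊢
    cases hv : φ.val I <;> cases hw : ψ.val I <;> simp_all [FForm.val, V4.impv]
  | @impT Γ Δ Θ Ω φ ψ _ ih =>
    obtain ⟨I, hI⟩ := ih
    refine ⟨I, ?_⟩
    simp only [ref1, ref2, ref3, ref4] at hI ⊢
    cases hv : φ.val I <;> cases hw : ψ.val I <;> simp_all [FForm.val, V4.impv]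

end Adequacy
section Completeness

open FForm

/-- Weight of a formula, used as termination measure. -/
def wt : FForm → ℕ
  | .atom _ => 3
  | .bb => 3
  | .nn => 3
  | .neg φ => 3 * wt φ
  | .conj φ ψ => 3 * wt φ * wt ψ
  | .imp φ ψ => 3 * wt φ * wt ψ

lemma wt_pos (φ : FForm) : 3 ≤ wt φ := by
  induction φ <;> simp [wt] <;> nlinarith

lemma sum_insert_le' (a : FForm) (s : Finset FForm) :
    (insert a s).sum wt ≤ wt a + s.sum wt := by
  by_cases h : a ∈ s
  · rw [Finset.insert_eq_self.2 h]; omega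
  · rw [Finset.sum_insert h]

lemma sum_insert2_le (a b : FForm) (s : Finset FForm) :
    (insert a (insert b s)).sum wt ≤ wt a + wt b + s.sum wt := by
  calc (insert a (insert b s)).sum wt ≤ wt a + (insert b s).sum wt := sum_insert_le' _ _
    _ ≤ wt a + (wt b + s.sum wt) := by have := sum_insert_le' b s; omega
    _ = wt a + wt b + s.sum wt := by ring

lemma key_arith (x y : ℕ) (hx : 3 ≤ x) (hy : 3 ≤ y) : 2*x + 2*y + 1 ≤ 3 * x * y := by
  nlinarith


lemma vkey_neg1 : ∀ a : V4, a.negv ≠ .f → a ≠ .t := by intro a; cases a <;> decide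
lemma vkey_neg2 : ∀ a : V4, a.negv ≠ .n → a ≠ .n := by intro a; cases a <;> decide
lemma vkey_neg3 : ∀ a : V4, a.negv ≠ .b → a ≠ .b := by intro a; cases a <;> decide
lemma vkey_neg4 : ∀ a : V4, a.negv ≠ .t → a ≠ .f := by intro a; cases a <;> decide
lemma vkey_conj1 : ∀ a c : V4, a.conjv c ≠ .f →
    (a ≠ .f ∧ c ≠ .f ∧ a ≠ .n ∧ c ≠ .n) ∨ (a ≠ .f ∧ c ≠ .f ∧ a ≠ .b ∧ c ≠ .b) := by intro a c; cases a <;> cases c <;> decide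
lemma vkey_conj2 : ∀ a c : V4, a.conjv c ≠ .n →
    (a ≠ .n ∧ c ≠ .n) ∨ (a ≠ .n ∧ a ≠ .t) ∨ (c ≠ .n ∧ c ≠ .t) := by intro a c; cases a <;> cases c <;> decide
lemma vkey_conj3 : ∀ a c : V4, a.conjv c ≠ .b →
    (a ≠ .b ∧ c ≠ .b) ∨ (a ≠ .b ∧ a ≠ .t) ∨ (c ≠ .b ∧ c ≠ .t) := by intro a c; cases a <;> cases c <;> decide
lemma vkey_conj4 : ∀ a c : V4, a.conjv c ≠ .t → a ≠ .t ∨ c ≠ .t := by intro a c; cases a <;> cases c <;> decide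
lemma vkey_imp1 : ∀ a c : V4, a.impv c ≠ .f → (a ≠ .b ∧ a ≠ .t) ∨ c ≠ .f := by intro a c; cases a <;> cases c <;> decide
lemma vkey_imp2 : ∀ a c : V4, a.impv c ≠ .n → (a ≠ .b ∧ a ≠ .t) ∨ c ≠ .n := by intro a c; cases a <;> cases c <;> decide
lemma vkey_imp3 : ∀ a c : V4, a.impv c ≠ .b → (a ≠ .b ∧ a ≠ .t) ∨ c ≠ .b := by intro a c; cases a <;> cases c <;> decide
lemma vkey_imp4 : ∀ a c : V4, a.impv c ≠ .t → a ≠ .f ∧ a ≠ .n ∧ c ≠ .t := by intro a c; cases a <;> cases c <;> decide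

lemma RF.complete (n : ℕ) : ∀ Γ₁ Γ₂ Γ₃ Γ₄ : Finset FForm,
    Γ₁.sum wt + Γ₂.sum wt + Γ₃.sum wt + Γ₄.sum wt < n →
    FAntiRefutable Γ₁ Γ₂ Γ₃ Γ₄ → RF Γ₁ Γ₂ Γ₃ Γ₄ := by
  induction n using Nat.strong_induction_on with
  | _ n IH =>
  intro Γ₁ Γ₂ Γ₃ Γ₄ hn hr
  by_cases hbas : ∀ φ ∈ Γ₁ ∪ Γ₂ ∪ Γ₃ ∪ Γ₄, φ.IsBasic
  · obtain ⟨I, h1, h2, h3, h4⟩ := hr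
    refine RF.ax _ _ _ _ hbas ?_ (fun h => h2 _ h rfl) (fun h => h3 _ h rfl)
    ext ψ
    simp only [Finset.mem_inter, Finset.notMem_empty, iff_false]
    rintro ⟨⟨⟨a, b⟩, c⟩, d⟩
    cases hv : ψ.val I
    exacts [h1 _ a hv, h2 _ b hv, h3 _ c hv, h4 _ d hv]
  · push_neg at hbas
    obtain ⟨φ, hmem, hnb⟩ := hbas
    simp only [Finset.mem_union] at hmem
    have hIH : ∀ Δ₁ Δ₂ Δ₃ Δ₄ : Finset FForm,
        Δ₁.sum wt + Δ₂.sum wt + Δ₃.sum wt + Δ₄.sum wt <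
          Γ₁.sum wt + Γ₂.sum wt + Γ₃.sum wt + Γ₄.sum wt →
        FAntiRefutable Δ₁ Δ₂ Δ₃ Δ₄ → RF Δ₁ Δ₂ Δ₃ Δ₄ :=
      IH _ hn
    clear IH hn
    obtain ⟨I, hI⟩ := hr
    rcases hmem with ((hm | hm) | hm) | hm
    -- φ ∈ Γ₁
    · have hnm : φ ∉ Γ₁.erase φ := Finset.notMem_erase _ _
      have hins : insert φ (Γ₁.erase φ) = Γ₁ := Finset.insert_erase hm
      set Γ := Γ₁.erase φ with hΓ
      have e : Γ₁.sum wt = wt φ + Γ.sum wt := by rw [← hins, Finset.sum_insert hnm]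
      rw [← hins] at hI ⊢
      rw [ref1] at hI
      obtain ⟨hv, hI⟩ := hI
      cases φ with
      | atom p => simp [FForm.IsBasic] at hnb
      | bb => simp [FForm.IsBasic] at hnb
      | nn => simp [FForm.IsBasic] at hnb
      | neg χ =>
        refine RF.negF (hIH _ _ _ _ ?_ ⟨I, ?_⟩)
        · have := sum_insert_le' χ Γ₄
          have := wt_pos χ
          simp only [wt] at e
          omega
        · have k := vkey_neg1 (χ.val I) (by simpa [FForm.val] using hv)
          rw [ref4]; exact ⟨k, hI⟩
      | conj χ ξ =>
        have hx := wt_pos χ; have hy := wt_pos ξ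
        have hk := key_arith (wt χ) (wt ξ) hx hy
        simp only [wt] at e
        have key := vkey_conj1 (χ.val I) (ξ.val I) (by simpa [FForm.val] using hv)
        rcases key with ⟨k1, k2, k3, k4⟩ | ⟨k1, k2, k3, k4⟩
        · refine RF.conjF1 (hIH _ _ _ _ ?_ ⟨I, ?_⟩)
          · have := sum_insert2_le χ ξ Γ
            have := sum_insert2_le χ ξ Γ₂
            omega
          · simp only [ref1, ref2]; tauto
        · refine RF.conjF2 (hIH _ _ _ _ ?_ ⟨I, ?_⟩)
          · have := sum_insert2_le χ ξ Γ
            have := sum_insert2_le χ ξ Γ₃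
            omega
          · simp only [ref1, ref3]; tauto
      | imp χ ξ =>
        have hx := wt_pos χ; have hy := wt_pos ξ
        have hk := key_arith (wt χ) (wt ξ) hx hy
        simp only [wt] at e
        have key := vkey_imp1 (χ.val I) (ξ.val I) (by simpa [FForm.val] using hv)
        rcases key with ⟨k1, k2⟩ | k1
        · refine RF.impF1 (hIH _ _ _ _ ?_ ⟨I, ?_⟩)
          · have := sum_insert_le' χ Γ₃
            have := sum_insert_le' χ Γ₄
            omega
          · simp only [ref3, ref4]; tauto
        · refine RF.impF2 (hIH _ _ _ _ ?_ ⟨I, ?_⟩)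
          · have := sum_insert_le' ξ Γ
            omega
          · simp only [ref1]; tauto
    -- φ ∈ Γ₂
    · have hnm : φ ∉ Γ₂.erase φ := Finset.notMem_erase _ _
      have hins : insert φ (Γ₂.erase φ) = Γ₂ := Finset.insert_erase hm
      set Δ := Γ₂.erase φ with hΔ
      have e : Γ₂.sum wt = wt φ + Δ.sum wt := by rw [← hins, Finset.sum_insert hnm]
      rw [← hins] at hI ⊢
      rw [ref2] at hI
      obtain ⟨hv, hI⟩ := hI
      cases φ with
      | atom p => simp [FForm.IsBasic] at hnb
      | bb => simp [FForm.IsBasic] at hnb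
      | nn => simp [FForm.IsBasic] at hnb
      | neg χ =>
        refine RF.negN (hIH _ _ _ _ ?_ ⟨I, ?_⟩)
        · have := sum_insert_le' χ Δ
          have := wt_pos χ
          simp only [wt] at e
          omega
        · have k := vkey_neg2 (χ.val I) (by simpa [FForm.val] using hv)
          rw [ref2]; exact ⟨k, hI⟩
      | conj χ ξ =>
        have hx := wt_pos χ; have hy := wt_pos ξ
        have hk := key_arith (wt χ) (wt ξ) hx hy
        simp only [wt] at e
        have key := vkey_conj2 (χ.val I) (ξ.val I) (by simpa [FForm.val] using hv)
        rcases key with ⟨k1, k2⟩ | ⟨k1, k2⟩ | ⟨k1, k2⟩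
        · refine RF.conjN1 (hIH _ _ _ _ ?_ ⟨I, ?_⟩)
          · have := sum_insert2_le χ ξ Δ
            omega
          · simp only [ref2]; tauto
        · refine RF.conjN2 (hIH _ _ _ _ ?_ ⟨I, ?_⟩)
          · have := sum_insert_le' χ Δ
            have := sum_insert_le' χ Γ₄
            omega
          · simp only [ref2, ref4]; tauto
        · refine RF.conjN3 (hIH _ _ _ _ ?_ ⟨I, ?_⟩)
          · have := sum_insert_le' ξ Δ
            have := sum_insert_le' ξ Γ₄
            omega
          · simp only [ref2, ref4]; tauto
      | imp χ ξ =>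
        have hx := wt_pos χ; have hy := wt_pos ξ
        have hk := key_arith (wt χ) (wt ξ) hx hy
        simp only [wt] at e
        have key := vkey_imp2 (χ.val I) (ξ.val I) (by simpa [FForm.val] using hv)
        rcases key with ⟨k1, k2⟩ | k1
        · refine RF.impN1 (hIH _ _ _ _ ?_ ⟨I, ?_⟩)
          · have := sum_insert_le' χ Γ₃
            have := sum_insert_le' χ Γ₄
            omega
          · simp only [ref3, ref4]; tauto
        · refine RF.impN2 (hIH _ _ _ _ ?_ ⟨I, ?_⟩)
          · have := sum_insert_le' ξ Δ
            omega
          · simp only [ref2]; tauto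
    -- φ ∈ Γ₃
    · have hnm : φ ∉ Γ₃.erase φ := Finset.notMem_erase _ _
      have hins : insert φ (Γ₃.erase φ) = Γ₃ := Finset.insert_erase hm
      set Θ := Γ₃.erase φ with hΘ
      have e : Γ₃.sum wt = wt φ + Θ.sum wt := by rw [← hins, Finset.sum_insert hnm]
      rw [← hins] at hI ⊢
      rw [ref3] at hI
      obtain ⟨hv, hI⟩ := hI
      cases φ with
      | atom p => simp [FForm.IsBasic] at hnb
      | bb => simp [FForm.IsBasic] at hnb
      | nn => simp [FForm.IsBasic] at hnb
      | neg χ =>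
        refine RF.negB (hIH _ _ _ _ ?_ ⟨I, ?_⟩)
        · have := sum_insert_le' χ Θ
          have := wt_pos χ
          simp only [wt] at e
          omega
        · have k := vkey_neg3 (χ.val I) (by simpa [FForm.val] using hv)
          rw [ref3]; exact ⟨k, hI⟩
      | conj χ ξ =>
        have hx := wt_pos χ; have hy := wt_pos ξ
        have hk := key_arith (wt χ) (wt ξ) hx hy
        simp only [wt] at e
        have key := vkey_conj3 (χ.val I) (ξ.val I) (by simpa [FForm.val] using hv)
        rcases key with ⟨k1, k2⟩ | ⟨k1, k2⟩ | ⟨k1, k2⟩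
        · refine RF.conjB1 (hIH _ _ _ _ ?_ ⟨I, ?_⟩)
          · have := sum_insert2_le χ ξ Θ
            omega
          · simp only [ref3]; tauto
        · refine RF.conjB2 (hIH _ _ _ _ ?_ ⟨I, ?_⟩)
          · have := sum_insert_le' χ Θ
            have := sum_insert_le' χ Γ₄
            omega
          · simp only [ref3, ref4]; tauto
        · refine RF.conjB3 (hIH _ _ _ _ ?_ ⟨I, ?_⟩)
          · have := sum_insert_le' ξ Θ
            have := sum_insert_le' ξ Γ₄
            omega
          · simp only [ref3, ref4]; tauto
      | imp χ ξ =>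
        have hx := wt_pos χ; have hy := wt_pos ξ
        have hk := key_arith (wt χ) (wt ξ) hx hy
        simp only [wt] at e
        have key := vkey_imp3 (χ.val I) (ξ.val I) (by simpa [FForm.val] using hv)
        rcases key with ⟨k1, k2⟩ | k1
        · refine RF.impB1 (hIH _ _ _ _ ?_ ⟨I, ?_⟩)
          · have := sum_insert_le' χ Θ
            have := sum_insert_le' χ Γ₄
            omega
          · simp only [ref3, ref4]; tauto
        · refine RF.impB2 (hIH _ _ _ _ ?_ ⟨I, ?_⟩)
          · have := sum_insert_le' ξ Θ
            omega
          · simp only [ref3]; tauto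
    -- φ ∈ Γ₄
    · have hnm : φ ∉ Γ₄.erase φ := Finset.notMem_erase _ _
      have hins : insert φ (Γ₄.erase φ) = Γ₄ := Finset.insert_erase hm
      set Ω := Γ₄.erase φ with hΩ
      have e : Γ₄.sum wt = wt φ + Ω.sum wt := by rw [← hins, Finset.sum_insert hnm]
      rw [← hins] at hI ⊢
      rw [ref4] at hI
      obtain ⟨hv, hI⟩ := hI
      cases φ with
      | atom p => simp [FForm.IsBasic] at hnb
      | bb => simp [FForm.IsBasic] at hnb
      | nn => simp [FForm.IsBasic] at hnb
      | neg χ =>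
        refine RF.negT (hIH _ _ _ _ ?_ ⟨I, ?_⟩)
        · have := sum_insert_le' χ Γ₁
          have := wt_pos χ
          simp only [wt] at e
          omega
        · have k := vkey_neg4 (χ.val I) (by simpa [FForm.val] using hv)
          rw [ref1]; exact ⟨k, hI⟩
      | conj χ ξ =>
        have hx := wt_pos χ; have hy := wt_pos ξ
        have hk := key_arith (wt χ) (wt ξ) hx hy
        simp only [wt] at e
        have key := vkey_conj4 (χ.val I) (ξ.val I) (by simpa [FForm.val] using hv)
        rcases key with k1 | k1
        · refine RF.conjT1 (hIH _ _ _ _ ?_ ⟨I, ?_⟩)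
          · have := sum_insert_le' χ Ω
            omega
          · simp only [ref4]; tauto
        · refine RF.conjT2 (hIH _ _ _ _ ?_ ⟨I, ?_⟩)
          · have := sum_insert_le' ξ Ω
            omega
          · simp only [ref4]; tauto
      | imp χ ξ =>
        have hx := wt_pos χ; have hy := wt_pos ξ
        have hk := key_arith (wt χ) (wt ξ) hx hy
        simp only [wt] at e
        have key := vkey_imp4 (χ.val I) (ξ.val I) (by simpa [FForm.val] using hv)
        obtain ⟨k1, k2, k3⟩ := key
        refine RF.impT (hIH _ _ _ _ ?_ ⟨I, ?_⟩)
        · have := sum_insert_le' χ Γ₁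
          have := sum_insert_le' χ Γ₂
          have := sum_insert_le' ξ Ω
          omega
        · simp only [ref1, ref2, ref4]; tauto

end Completeness

/-- Adequacy of the anti-sequent calculus `R_F`: an F-anti-sequent
`Γ₁ ∤ Γ₂ ∤ Γ₃ ∤ Γ₄` is provable in `R_F` iff it is refutable. -/
theorem RF_adequate (Γ₁ Γ₂ Γ₃ Γ₄ : Finset FForm) :
    RF Γ₁ Γ₂ Γ₃ Γ₄ ↔ FAntiRefutable Γ₁ Γ₂ Γ₃ Γ₄ := by
  constructor
  · exact RF.sound
  · exact fun h => RF.complete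
      (Γ₁.sum wt + Γ₂.sum wt + Γ₃.sum wt + Γ₄.sum wt + 1) Γ₁ Γ₂ Γ₃ Γ₄ (by omega) h
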